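/- With the coefficients Ξ_k as defined in the context, ∑_{k=0}^{M} (k+1)·|Ξ_k| ≤ C·M/16 + (2/π)·log M + π, where C = 32·(1/3 + 1/π). -/

import Mathlib

open Real

/-- `g(u) = -(1-u)·cot(πu) - 1/π` for `u < 1`, and `g(u) = 0` for `u ≥ 1`. -/
noncomputable def selbergG (u : ℝ) : ℝ :=
  if u < 1 then -(1 - u) * Real.cot (Real.pi * u) - 1 / Real.pi else 0

/-- The coefficients `Ξ_k`, `0 ≤ k ≤ M`, of the Beurling–Selberg minorant:
`Ξ_k = ((β-α)/π)·[k=0] - (1 - k/(M+1))·(cos kα + cos kβ)/(M+1)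
       - g(k/(M+1))·(sin kβ - sin kα)/(M+1)
       + (1 - (k+2)/(M+1))·(cos (k+2)α + cos (k+2)β)/(M+1)
       + g((k+2)/(M+1))·(sin (k+2)β - sin (k+2)α)/(M+1)`,
where for `k = 0` the term involving `g(k/(M+1))` is interpreted as `0`, and for
`k ∈ {M-1, M}` the last two terms are omitted. -/
noncomputable def selbergXi (α β : ℝ) (M k : ℕ) : ℝ :=
  (if k = 0 then (β - α) / Real.pi else 0)
    - (1 - (k : ℝ) / (M + 1)) * (Real.cos (k * α) + Real.cos (k * β)) / (M + 1)
    - (if k = 0 then 0 else selbergG ((k : ℝ) / (M + 1)))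
        * (Real.sin (k * β) - Real.sin (k * α)) / (M + 1)
    + (if k + 2 ≤ M then
        (1 - ((k : ℝ) + 2) / (M + 1)) * (Real.cos ((k + 2) * α) + Real.cos ((k + 2) * β)) / (M + 1)
          + selbergG (((k : ℝ) + 2) / (M + 1))
            * (Real.sin ((k + 2) * β) - Real.sin ((k + 2) * α)) / (M + 1)
      else 0)

lemma selbergG_nonpos {u : ℝ} (h0 : 0 < u) (h1 : u < 1) : selbergG u ≤ 0 := by
  rw [selbergG, if_pos h1]
  have hπ := Real.pi_pos
  rcases le_or_gt u (1/2) with hu | hu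
  · have hsin : 0 < Real.sin (π * u) := Real.sin_pos_of_pos_of_lt_pi (by positivity) (by nlinarith)
    have hcos : 0 ≤ Real.cos (π * u) :=
      Real.cos_nonneg_of_mem_Icc ⟨by nlinarith, by nlinarith⟩
    have hcot : 0 ≤ Real.cot (π * u) := by
      rw [Real.cot_eq_cos_div_sin]; positivity
    nlinarith [mul_nonneg (by linarith : (0:ℝ) ≤ 1 - u) hcot, one_div_pos.mpr hπ]
  · set v := 1 - u with hv
    have hv0 : 0 < v := by simp [hv]; linarith
    have hv2 : v < 1/2 := by simp [hv]; linarith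
    have hsin : 0 < Real.sin (π * v) := Real.sin_pos_of_pos_of_lt_pi (by positivity) (by nlinarith)
    have hcos : 0 < Real.cos (π * v) :=
      Real.cos_pos_of_mem_Ioo ⟨by nlinarith, by nlinarith⟩
    have hcoteq : Real.cot (π * u) = - (Real.cos (π * v) / Real.sin (π * v)) := by
      have : π * u = π - π * v := by rw [hv]; ring
      rw [this, Real.cot_eq_cos_div_sin, Real.cos_pi_sub, Real.sin_pi_sub, neg_div]
    have htan : π * v < Real.tan (π * v) := Real.lt_tan (by positivity) (by nlinarith)
    rw [Real.tan_eq_sin_div_cos, lt_div_iff₀ hcos] at htan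
    rw [hcoteq]
    have key : v * Real.cos (π * v) / Real.sin (π * v) ≤ 1 / π := by
      rw [div_le_div_iff₀ hsin hπ]
      nlinarith [mul_nonneg hv0.le hcos.le]
    have heq : -(1 - u) * -(Real.cos (π * v) / Real.sin (π * v))
        = v * Real.cos (π * v) / Real.sin (π * v) := by
      rw [hv]; ring
    rw [heq]
    linarith

lemma selbergG_reflect {u : ℝ} (h0 : 0 < u) (h1 : u < 1) :
    u * (-selbergG u) + (1 - u) * (-selbergG (1 - u)) = 1 / π := by
  have h1u : 1 - u < 1 := by linarith
  rw [selbergG, selbergG, if_pos h1, if_pos h1u]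
  have hcot : Real.cot (π * (1 - u)) = - Real.cot (π * u) := by
    have : π * (1 - u) = π - π * u := by ring
    rw [this, Real.cot_eq_cos_div_sin, Real.cos_pi_sub, Real.sin_pi_sub, neg_div,
      ← Real.cot_eq_cos_div_sin]
  rw [hcot]
  ring

lemma sum_one' (n : ℕ) : ∑ i ∈ Finset.range n, ((i:ℝ)+1) = (n:ℝ)*((n:ℝ)+1)/2 := by
  induction n with
  | zero => simp
  | succ n ih => rw [Finset.sum_range_succ, ih]; push_cast; ring

lemma sum_sq' (n : ℕ) : ∑ i ∈ Finset.range n, ((i:ℝ)+1)^2 = (n:ℝ)*((n:ℝ)+1)*(2*(n:ℝ)+1)/6 := by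
  induction n with
  | zero => simp
  | succ n ih => rw [Finset.sum_range_succ, ih]; push_cast; ring

lemma sum_tri' (M : ℕ) : ∑ i ∈ Finset.range M, ((i:ℝ)+1) * ((M:ℝ) - i)
    = (M:ℝ)*((M:ℝ)+1)*((M:ℝ)+2)/6 := by
  have h : ∀ i ∈ Finset.range M, ((i:ℝ)+1) * ((M:ℝ) - i)
      = ((M:ℝ)+1)*((i:ℝ)+1) - ((i:ℝ)+1)^2 := by intro i _; ring
  rw [Finset.sum_congr rfl h, Finset.sum_sub_distrib, ← Finset.mul_sum, sum_one', sum_sq']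
  ring

lemma phi_sum (M : ℕ) :
    ∑ i ∈ Finset.range M, (((i:ℝ)+1)/((M:ℝ)+1)) * (-selbergG (((i:ℝ)+1)/((M:ℝ)+1)))
      = (M:ℝ)/(2*π) := by
  have hπ := Real.pi_pos
  set f : ℕ → ℝ := fun i => (((i:ℝ)+1)/((M:ℝ)+1)) * (-selbergG (((i:ℝ)+1)/((M:ℝ)+1))) with hf
  have hrefl : ∀ i ∈ Finset.range M, f (M - 1 - i) + f i = 1/π := by
    intro i hi
    rw [Finset.mem_range] at hi
    have hcast : ((M - 1 - i : ℕ) : ℝ) = (M:ℝ) - (i:ℝ) - 1 := by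
      rw [Nat.cast_sub (by omega), Nat.cast_sub (by omega), Nat.cast_one]; ring
    set u : ℝ := ((i:ℝ)+1)/((M:ℝ)+1) with hu
    have hMpos : (0:ℝ) < (M:ℝ) + 1 := by positivity
    have h0 : 0 < u := by rw [hu]; positivity
    have h1 : u < 1 := by
      rw [hu, div_lt_one hMpos]
      have : (i:ℝ) < (M:ℝ) := by exact_mod_cast hi
      linarith
    have harg : (((M - 1 - i : ℕ) : ℝ) + 1)/((M:ℝ)+1) = 1 - u := by
      rw [hcast, hu]; field_simp; ring
    have hfu : f (M - 1 - i) = (1 - u) * (-selbergG (1 - u)) := by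
      simp only [hf]
      rw [harg]
    rw [hfu, hf]
    simp only
    rw [← hu, add_comm]
    exact selbergG_reflect h0 h1
  have h2 : (∑ i ∈ Finset.range M, f i) + (∑ i ∈ Finset.range M, f i) = (M:ℝ) * (1/π) := by
    nth_rewrite 1 [← Finset.sum_range_reflect]
    rw [← Finset.sum_add_distrib, Finset.sum_congr rfl hrefl, Finset.sum_const,
      Finset.card_range, nsmul_eq_mul]
  have h3 : (M:ℝ) * (1/π) = 2 * ((M:ℝ)/(2*π)) := by field_simp
  linarith

/-- The single-index coefficient making up `selbergXi`. -/
noncomputable def cAux (α β : ℝ) (M j : ℕ) : ℝ :=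
  (1 - (j : ℝ) / ((M:ℝ) + 1)) * (Real.cos (j * α) + Real.cos (j * β)) / ((M:ℝ) + 1)
    + (if j = 0 then 0 else selbergG ((j : ℝ) / ((M:ℝ) + 1)))
        * (Real.sin (j * β) - Real.sin (j * α)) / ((M:ℝ) + 1)

/-- Pointwise bound for `|cAux|`. -/
noncomputable def bAux (M j : ℕ) : ℝ :=
  2 * (1 - (j:ℝ)/((M:ℝ)+1)) / ((M:ℝ)+1)
    + (if j = 0 then 0 else (-selbergG ((j:ℝ)/((M:ℝ)+1))) * 2 / ((M:ℝ)+1))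

lemma xi_eq (α β : ℝ) (M k : ℕ) :
    selbergXi α β M k = (if k = 0 then (β - α) / π else 0) - cAux α β M k
      + (if k + 2 ≤ M then cAux α β M (k+2) else 0) := by
  have h2 : ¬ (k + 2 = 0) := by omega
  rw [selbergXi, cAux, cAux, if_neg h2]
  split_ifs <;> push_cast <;> ring

lemma cAux_abs_le (α β : ℝ) (M j : ℕ) (hj : j ≤ M) : |cAux α β M j| ≤ bAux M j := by
  have hN : (0:ℝ) < (M:ℝ) + 1 := by positivity
  have hjM : (j:ℝ) ≤ (M:ℝ) := by exact_mod_cast hj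
  have h1j : 0 ≤ 1 - (j:ℝ)/((M:ℝ)+1) := by
    rw [sub_nonneg, div_le_one hN]; linarith
  have hcos2 : |Real.cos (j * α) + Real.cos (j * β)| ≤ 2 := by
    calc |Real.cos (j * α) + Real.cos (j * β)| ≤ |Real.cos (j * α)| + |Real.cos (j * β)| :=
          abs_add_le _ _
      _ ≤ 2 := by
          have := Real.abs_cos_le_one (j * α)
          have := Real.abs_cos_le_one (j * β)
          linarith
  have hsin2 : |Real.sin (j * β) - Real.sin (j * α)| ≤ 2 := by
    calc |Real.sin (j * β) - Real.sin (j * α)| ≤ |Real.sin (j * β)| + |Real.sin (j * α)| :=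
          abs_sub _ _
      _ ≤ 2 := by
          have := Real.abs_sin_le_one (j * β)
          have := Real.abs_sin_le_one (j * α)
          linarith
  rw [cAux, bAux]
  refine (abs_add_le _ _).trans (add_le_add ?_ ?_)
  · rw [abs_div, abs_of_pos hN, abs_mul, abs_of_nonneg h1j]
    rw [div_le_div_iff₀ hN hN]
    nlinarith [mul_le_mul_of_nonneg_right (mul_le_mul_of_nonneg_left hcos2 h1j) hN.le]
  · rcases eq_or_ne j 0 with hj0 | hj0
    · simp [hj0]
    · rw [if_neg hj0, if_neg hj0]
      have hj1 : 1 ≤ j := Nat.one_le_iff_ne_zero.mpr hj0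
      have hu0 : 0 < (j:ℝ)/((M:ℝ)+1) := by
        have : (0:ℝ) < (j:ℝ) := by exact_mod_cast hj1
        positivity
      have hu1 : (j:ℝ)/((M:ℝ)+1) < 1 := by
        rw [div_lt_one hN]; linarith
      have hg := selbergG_nonpos hu0 hu1
      rw [abs_div, abs_of_pos hN, abs_mul, abs_of_nonpos hg]
      rw [div_le_div_iff₀ hN hN]
      nlinarith [mul_le_mul_of_nonneg_right
        (mul_le_mul_of_nonneg_left hsin2 (neg_nonneg.mpr hg)) hN.le]

lemma bAux_nonneg (M j : ℕ) (hj : j ≤ M) : 0 ≤ bAux M j :=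
  (abs_nonneg _).trans (cAux_abs_le 0 0 M j hj)

/-- For `0 ≤ α ≤ β ≤ π` and `M ≥ 8`:
`∑_{k=0}^{M} (k+1)·|Ξ_k| ≤ C·M/16 + (2/π) log M + π` with `C = 32(1/3 + 1/π)`. -/
theorem xi_weighted_sum_bound' (α β : ℝ) (hα : 0 ≤ α) (hαβ : α ≤ β) (hβ : β ≤ Real.pi)
    (M : ℕ) (hM : 8 ≤ M) :
    ∑ k ∈ Finset.range (M + 1), ((k : ℝ) + 1) * |selbergXi α β M k| ≤
      32 * (1 / 3 + 1 / Real.pi) * M / 16 + 2 / Real.pi * Real.log M + Real.pi := by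
  have hπ := Real.pi_pos
  have hN : (0:ℝ) < (M:ℝ) + 1 := by positivity
  have hM8 : (8:ℝ) ≤ (M:ℝ) := by exact_mod_cast hM
  -- termwise bound
  have key : ∀ k ∈ Finset.range (M+1),
      ((k:ℝ)+1) * |selbergXi α β M k| ≤
        ((k:ℝ)+1) * (if k = 0 then (β-α)/π else 0) + ((k:ℝ)+1) * bAux M k
          + ((k:ℝ)+1) * (if k + 2 ≤ M then bAux M (k+2) else 0) := by
    intro k hk
    rw [Finset.mem_range] at hk
    have hk' : k ≤ M := by omega
    have habs : |selbergXi α β M k| ≤ (if k = 0 then (β-α)/π else 0) + bAux M k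
        + (if k + 2 ≤ M then bAux M (k+2) else 0) := by
      rw [xi_eq]
      refine (abs_add_le _ _).trans (add_le_add ((abs_sub _ _).trans (add_le_add ?_ ?_)) ?_)
      · split_ifs
        · rw [abs_of_nonneg (div_nonneg (by linarith) hπ.le)]
        · simp
      · exact cAux_abs_le α β M k hk'
      · split_ifs with h
        · exact cAux_abs_le α β M (k+2) h
        · simp
    have hk1 : (0:ℝ) ≤ (k:ℝ)+1 := by positivity
    calc ((k:ℝ)+1) * |selbergXi α β M k|
        ≤ ((k:ℝ)+1) * ((if k = 0 then (β-α)/π else 0) + bAux M k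
            + (if k + 2 ≤ M then bAux M (k+2) else 0)) :=
          mul_le_mul_of_nonneg_left habs hk1
      _ = ((k:ℝ)+1) * (if k = 0 then (β-α)/π else 0) + ((k:ℝ)+1) * bAux M k
            + ((k:ℝ)+1) * (if k + 2 ≤ M then bAux M (k+2) else 0) := by ring
  have step1 := Finset.sum_le_sum key
  rw [Finset.sum_add_distrib, Finset.sum_add_distrib] at step1
  -- first piece
  have hT1 : ∑ k ∈ Finset.range (M+1), ((k:ℝ)+1) * (if k = 0 then (β-α)/π else 0)
      = (β-α)/π := by
    rw [Finset.sum_eq_single 0]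
    · simp
    · intro b _ hb; simp [hb]
    · intro h; exact absurd (Finset.mem_range.mpr (by omega)) h
  -- second piece
  have hT2 : ∑ k ∈ Finset.range (M+1), ((k:ℝ)+1) * bAux M k
      = (∑ i ∈ Finset.range M, (((i:ℝ)+1)+1) * bAux M (i+1)) + bAux M 0 := by
    rw [Finset.sum_range_succ']
    congr 1
    · exact Finset.sum_congr rfl fun i _ => by push_cast; ring
    · norm_num
  -- third piece
  have hT3 : ∑ k ∈ Finset.range (M+1), ((k:ℝ)+1) * (if k + 2 ≤ M then bAux M (k+2) else 0)
      = ∑ i ∈ Finset.range M, (i:ℝ) * bAux M (i+1) := by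
    obtain ⟨m, rfl⟩ : ∃ m, M = m + 1 := ⟨M - 1, by omega⟩
    rw [Finset.sum_range_succ, if_neg (by omega : ¬(m + 1 + 2 ≤ m + 1)),
      Finset.sum_range_succ, if_neg (by omega : ¬(m + 2 ≤ m + 1)),
      Finset.sum_range_succ']
    simp only [mul_zero, add_zero, Nat.cast_zero, zero_mul, Nat.cast_add, Nat.cast_one]
    refine Finset.sum_congr rfl fun i hi => ?_
    rw [Finset.mem_range] at hi
    rw [if_pos (by omega : i + 2 ≤ m + 1)]
  -- the main weighted sum over j = i+1
  have hE : ∑ i ∈ Finset.range M, (((i:ℝ)+1)) * bAux M (i+1)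
      = (M:ℝ)*((M:ℝ)+1)*((M:ℝ)+2)/6 * (2/(((M:ℝ)+1)^2)) + 2 * ((M:ℝ)/(2*π)) := by
    have hterm : ∀ i ∈ Finset.range M, (((i:ℝ)+1)) * bAux M (i+1)
        = (2/(((M:ℝ)+1)^2)) * (((i:ℝ)+1)*((M:ℝ)-(i:ℝ)))
          + 2 * ((((i:ℝ)+1)/((M:ℝ)+1)) * (-selbergG (((i:ℝ)+1)/((M:ℝ)+1)))) := by
      intro i _
      rw [bAux, if_neg (Nat.succ_ne_zero i)]
      push_cast
      field_simp
      ring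
    rw [Finset.sum_congr rfl hterm, Finset.sum_add_distrib, ← Finset.mul_sum, ← Finset.mul_sum,
      sum_tri', phi_sum]
    ring
  -- numeric bounds
  have hβα : (β-α)/π ≤ 1 := by
    rw [div_le_one hπ]; linarith
  have hb0 : bAux M 0 ≤ 2/9 := by
    have hb0e : bAux M 0 = 2/((M:ℝ)+1) := by
      simp [bAux]
    rw [hb0e, div_le_div_iff₀ hN (by norm_num)]
    linarith
  have hEbound : (M:ℝ)*((M:ℝ)+1)*((M:ℝ)+2)/6 * (2/(((M:ℝ)+1)^2)) ≤ ((M:ℝ)+1)/3 := by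
    rw [div_mul_div_comm, div_le_div_iff₀ (by positivity) (by norm_num)]
    nlinarith
  have hlog : 0 ≤ 2 / π * Real.log M := by
    have : 0 ≤ Real.log M := Real.log_nonneg (by linarith)
    positivity
  have hpi3 : (3:ℝ) < π := Real.pi_gt_three
  have hRHS : 32 * (1 / 3 + 1 / π) * (M:ℝ) / 16 = 2/3*(M:ℝ) + 2*((M:ℝ)/(2*π)) + (M:ℝ)/π := by
    field_simp
    ring
  -- combine
  have hsum2 : (∑ i ∈ Finset.range M, (((i:ℝ)+1)+1) * bAux M (i+1))
      + ∑ i ∈ Finset.range M, (i:ℝ) * bAux M (i+1)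
      = 2 * ∑ i ∈ Finset.range M, (((i:ℝ)+1)) * bAux M (i+1) := by
    rw [Finset.mul_sum, ← Finset.sum_add_distrib]
    exact Finset.sum_congr rfl fun i _ => by ring
  have hfin : ∑ k ∈ Finset.range (M + 1), ((k : ℝ) + 1) * |selbergXi α β M k|
      ≤ (β-α)/π + bAux M 0
        + 2 * ((M:ℝ)*((M:ℝ)+1)*((M:ℝ)+2)/6 * (2/(((M:ℝ)+1)^2)) + 2 * ((M:ℝ)/(2*π))) := by
    calc ∑ k ∈ Finset.range (M + 1), ((k : ℝ) + 1) * |selbergXi α β M k|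
        ≤ (β-α)/π + ((∑ i ∈ Finset.range M, (((i:ℝ)+1)+1) * bAux M (i+1)) + bAux M 0)
          + ∑ i ∈ Finset.range M, (i:ℝ) * bAux M (i+1) := by
          rw [← hT1, ← hT2, ← hT3]; exact step1
      _ = (β-α)/π + bAux M 0
          + 2 * ∑ i ∈ Finset.range M, (((i:ℝ)+1)) * bAux M (i+1) := by
          rw [← hsum2]; ring
      _ = _ := by rw [hE]
  have h2Mpi : 2 * (2 * ((M:ℝ)/(2*π))) = 2*((M:ℝ)/(2*π)) + (M:ℝ)/π := by
    field_simp; ring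
  rw [hRHS]
  linarith [hfin, hEbound, hb0, hβα, hlog, h2Mpi]
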